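/- Let K ⊆ ℝ³ be a body of constant width one. Then its circumradius satisfies R(K) ≤ √(3/8) and its inradius satisfies r(K) ≥ 1 − √(3/8). -/

import Mathlib

open MeasureTheory Metric Filter
open scoped RealInnerProductSpace

noncomputable section

/-- The support function of a set `K ⊆ ℝ³`. -/
def suppFn (K : Set (EuclideanSpace ℝ (Fin 3))) (u : EuclideanSpace ℝ (Fin 3)) : ℝ :=
  sSup ((fun x => ⟪x, u⟫) '' K)

/-- A body of constant width one in `ℝ³`: a nonempty compact convex set whose support
function satisfies `H(u) + H(-u) = ‖u‖` for all `u`. -/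
def IsBodyOfConstantWidthOne (K : Set (EuclideanSpace ℝ (Fin 3))) : Prop :=
  K.Nonempty ∧ IsCompact K ∧ Convex ℝ K ∧
    ∀ u : EuclideanSpace ℝ (Fin 3), suppFn K u + suppFn K (-u) = ‖u‖

/-- The inradius of `K ⊆ ℝ³`. -/
def inradius (K : Set (EuclideanSpace ℝ (Fin 3))) : ℝ :=
  sSup {r : ℝ | 0 ≤ r ∧ ∃ a : EuclideanSpace ℝ (Fin 3), closedBall a r ⊆ K}

/-- The circumradius of `K ⊆ ℝ³`. -/
def circumradius (K : Set (EuclideanSpace ℝ (Fin 3))) : ℝ :=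
  sInf {r : ℝ | 0 ≤ r ∧ ∃ a : EuclideanSpace ℝ (Fin 3), K ⊆ closedBall a r}

namespace JungAux

variable {E : Type*} [NormedAddCommGroup E] [InnerProductSpace ℝ E]

/-- Projection onto a compact convex set: the obtuse-angle property. -/
lemma exists_proj {C : Set E} (hC : Convex ℝ C) (hcpt : IsCompact C) (hne : C.Nonempty)
    (y : E) : ∃ p ∈ C, ∀ x ∈ C, ⟪y - p, x - p⟫ ≤ 0 := by
  obtain ⟨p, hp, hmin⟩ := exists_norm_eq_iInf_of_complete_convex hne hcpt.isComplete hC y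
  exact ⟨p, hp, (norm_eq_iInf_iff_real_inner_le_zero hC hp).1 hmin⟩

/-- Jung's theorem for at most four points in a real inner product space. -/
lemma jung_finite (s : Finset E) (hs : s.Nonempty) (hcard : s.card ≤ 4)
    (hdiam : ∀ x ∈ s, ∀ y ∈ s, dist x y ≤ 1) :
    ∃ c : E, ∀ x ∈ s, dist c x ≤ Real.sqrt (3/8) := by
  classical
  set f : E → ℝ := fun c => s.sup' hs (fun x => dist c x) with hf
  have hfcont : Continuous f := continuous_iff_continuousAt.2 fun a =>
    ContinuousAt.finset_sup'_apply hs fun i _ => (continuous_id.dist continuous_const).continuousAt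
  have hHcpt : IsCompact (convexHull ℝ (s : Set E)) := (s.finite_toSet.isCompact_convexHull ℝ)
  have hHne : (convexHull ℝ (s : Set E)).Nonempty :=
    ⟨hs.choose, subset_convexHull ℝ _ hs.choose_spec⟩
  obtain ⟨c, hcH, hcmin⟩ := hHcpt.exists_isMinOn hHne hfcont.continuousOn
  set R := f c with hR
  have hle : ∀ x ∈ s, dist c x ≤ R := fun x hx => Finset.le_sup' _ hx
  have hR0 : 0 ≤ R := le_trans dist_nonneg (hle _ hs.choose_spec)
  set A : Finset E := s.filter (fun x => dist c x = R) with hA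
  have hAne : A.Nonempty := by
    obtain ⟨x, hx, hxe⟩ := Finset.exists_mem_eq_sup' hs (fun x => dist c x)
    exact ⟨x, Finset.mem_filter.2 ⟨hx, hxe.symm⟩⟩
  have hAR : ∀ x ∈ A, dist c x = R := fun x hx => (Finset.mem_filter.1 hx).2
  have hAs : A ⊆ s := Finset.filter_subset _ _
  -- Step 1: c ∈ convexHull A
  have hcA : c ∈ convexHull ℝ (A : Finset E) := by
    by_contra hc
    obtain ⟨p, hpA, hproj⟩ := exists_proj (convex_convexHull ℝ _)
      (A.finite_toSet.isCompact_convexHull ℝ) ⟨hAne.choose, subset_convexHull ℝ _ hAne.choose_spec⟩ c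
    have hpc : p ≠ c := fun h => hc (h ▸ hpA)
    set u := p - c with hu
    have hun : 0 < ‖u‖ := by simpa [hu, sub_eq_zero] using hpc
    have hA2 : ∀ x ∈ A, ‖u‖^2 ≤ ⟪x - c, u⟫ := by
      intro x hx
      have h1 := hproj x (subset_convexHull ℝ _ hx)
      have : ⟪x - c, u⟫ - ‖u‖^2 = -⟪c - p, x - p⟫ := by
        rw [hu, ← real_inner_self_eq_norm_sq]
        simp only [inner_sub_left, inner_sub_right]
        have := real_inner_comm x p; have := real_inner_comm x c; have := real_inner_comm p c
        linarith
      linarith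
    set T : ℝ := min 1 (s.inf' hs fun x => if dist c x = R then 1 else (R - dist c x) / ‖u‖) with hT
    have hTpos : 0 < T := by
      refine lt_min one_pos ?_
      rw [Finset.lt_inf'_iff]
      intro x hx
      by_cases hxd : dist c x = R
      · simp [hxd]
      · have hlt : dist c x < R := lt_of_le_of_ne (hle x hx) hxd
        simp only [hxd, if_false]
        exact div_pos (by linarith) hun
    set t := T / 2 with ht
    have ht0 : 0 < t := by positivity
    have ht1 : t < 1 := by
      have : T ≤ 1 := min_le_left _ _
      simp only [ht]; linarith
    have hc'H : c + t • u ∈ convexHull ℝ (s : Set E) := by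
      have hpH : p ∈ convexHull ℝ (s : Set E) := convexHull_mono hAs hpA
      have heq : c + t • u = (1 - t) • c + t • p := by
        simp only [hu, smul_sub]; module
      rw [heq]
      exact (convex_convexHull ℝ _) hcH hpH (by linarith) (le_of_lt ht0) (by ring)
    have hlt : f (c + t • u) < R := by
      rw [hf, Finset.sup'_lt_iff]
      intro x hx
      by_cases hxd : dist c x = R
      · have hx2 := hA2 x (Finset.mem_filter.2 ⟨hx, hxd⟩)
        have hd2 : dist (c + t • u) x ^ 2 = dist c x ^2 - 2 * t * ⟪x - c, u⟫ + t^2 * ‖u‖^2 := by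
          have hee : c + t • u - x = -((x - c) - t • u) := by abel
          rw [dist_eq_norm, dist_eq_norm, norm_sub_rev c x, hee, norm_neg, norm_sub_sq_real,
            real_inner_smul_right, norm_smul, Real.norm_eq_abs, abs_of_pos ht0]
          ring
        have hq : dist (c + t • u) x ^ 2 < R ^ 2 := by
          rw [hd2, hxd]
          have h7 : t * ‖u‖^2 ≤ t * ⟪x - c, u⟫ := mul_le_mul_of_nonneg_left hx2 ht0.le
          have h8 : 0 < t * ‖u‖^2 := mul_pos ht0 (pow_pos hun 2)
          nlinarith [h7, h8, ht1]
        exact lt_of_pow_lt_pow_left₀ 2 hR0 hq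
      · have hTle : T ≤ (R - dist c x) / ‖u‖ :=
          le_trans (min_le_right _ _) (Finset.inf'_le_of_le _ hx (by simp [hxd]))
        have hpos : 0 < (R - dist c x) / ‖u‖ := lt_of_lt_of_le hTpos hTle
        have h2 : t < (R - dist c x) / ‖u‖ := by
          simp only [ht]; linarith
        have h3 : t * ‖u‖ < R - dist c x := by
          calc t * ‖u‖ < ((R - dist c x) / ‖u‖) * ‖u‖ := mul_lt_mul_of_pos_right h2 hun
          _ = R - dist c x := by field_simp
        calc dist (c + t • u) x ≤ dist (c + t • u) c + dist c x := dist_triangle _ _ _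
        _ = t * ‖u‖ + dist c x := by
              rw [dist_eq_norm]; simp [norm_smul, abs_of_pos ht0]
        _ < R := by linarith
    exact absurd (hcmin hc'H) (by simpa using not_le.2 hlt)
  -- Step 2: algebra
  rw [Finset.convexHull_eq] at hcA
  obtain ⟨w, hw0, hw1, hwc⟩ := hcA
  rw [Finset.centerMass_eq_of_sum_1 _ _ hw1] at hwc
  simp only [id] at hwc
  have hzero : ∑ y ∈ A, w y • (y - c) = 0 := by
    simp only [smul_sub, Finset.sum_sub_distrib, ← Finset.sum_smul, hw1, hwc, one_smul, sub_self]
  have hinner : (0:ℝ) = ∑ y ∈ A, ∑ z ∈ A, w y * w z * ⟪y - c, z - c⟫ := by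
    have h0 : ⟪∑ y ∈ A, w y • (y - c), ∑ z ∈ A, w z • (z - c)⟫ = (0:ℝ) := by
      rw [hzero]; simp
    rw [← h0, sum_inner]
    refine Finset.sum_congr rfl fun y _ => ?_
    rw [real_inner_smul_left, inner_sum, Finset.mul_sum]
    refine Finset.sum_congr rfl fun z _ => ?_
    rw [real_inner_smul_right]; ring
  have hterm : ∀ y ∈ A, ∀ z ∈ A, ⟪y - c, z - c⟫ = R^2 - ‖y - z‖^2 / 2 := by
    intro y hy z hz
    have hny : ‖y - c‖ = R := by rw [← dist_eq_norm, dist_comm]; exact hAR y hy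
    have hnz : ‖z - c‖ = R := by rw [← dist_eq_norm, dist_comm]; exact hAR z hz
    have hsub : ‖(y - c) - (z - c)‖ = ‖y - z‖ := by congr 1; abel
    have h4 := norm_sub_sq_real (y - c) (z - c)
    rw [hsub, hny, hnz] at h4
    linarith
  have e1 : ∑ y ∈ A, ∑ z ∈ A, w y * w z * R^2 = R^2 := by
    simp only [← Finset.sum_mul]
    rw [← Finset.sum_mul_sum, hw1, one_mul, one_mul]
  have hkey : R^2 = (∑ y ∈ A, ∑ z ∈ A, w y * w z * ‖y - z‖^2) / 2 := by
    have h5 : (0:ℝ) = ∑ y ∈ A, ∑ z ∈ A, (w y * w z * R^2 - w y * w z * ‖y - z‖^2 / 2) := by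
      rw [hinner]
      refine Finset.sum_congr rfl fun y hy => Finset.sum_congr rfl fun z hz => ?_
      rw [hterm y hy z hz]; ring
    simp only [Finset.sum_sub_distrib] at h5
    rw [e1] at h5
    simp only [← Finset.sum_div] at h5
    linarith
  have hb : ∑ y ∈ A, ∑ z ∈ A, w y * w z * ‖y - z‖^2 ≤ 1 - ∑ y ∈ A, (w y)^2 := by
    have step : ∀ y ∈ A, ∑ z ∈ A, w y * w z * ‖y - z‖^2 ≤ w y - (w y)^2 := by
      intro y hy
      calc ∑ z ∈ A, w y * w z * ‖y - z‖^2
          ≤ ∑ z ∈ A, (w y * w z - if z = y then w y * w z else 0) := by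
            refine Finset.sum_le_sum fun z hz => ?_
            by_cases h : z = y
            · subst h; simp
            · simp only [h, if_false, sub_zero]
              have hd : ‖y - z‖ ≤ 1 := by
                rw [← dist_eq_norm]; exact hdiam y (hAs hy) z (hAs hz)
              have hwy := hw0 y hy
              have hwz := hw0 z hz
              have hsq : ‖y - z‖^2 ≤ 1 := by nlinarith [norm_nonneg (y - z)]
              nlinarith [mul_nonneg hwy hwz, hsq]
        _ = w y - (w y)^2 := by
            rw [Finset.sum_sub_distrib, Finset.sum_ite_eq' A y (fun z => w y * w z)]
            simp only [hy, if_true, ← Finset.mul_sum, hw1]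
            ring
    calc ∑ y ∈ A, ∑ z ∈ A, w y * w z * ‖y - z‖^2 ≤ ∑ y ∈ A, (w y - (w y)^2) :=
          Finset.sum_le_sum step
    _ = 1 - ∑ y ∈ A, (w y)^2 := by rw [Finset.sum_sub_distrib, hw1]
  have hcs : (1:ℝ)/4 ≤ ∑ y ∈ A, (w y)^2 := by
    have h6 : ((1:ℝ))^2 ≤ (A.card : ℝ) * ∑ y ∈ A, (w y)^2 := by
      have := sq_sum_le_card_mul_sum_sq (s := A) (f := w)
      rw [hw1] at this
      exact_mod_cast this
    have hA4 : (A.card : ℝ) ≤ 4 := by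
      exact_mod_cast le_trans (Finset.card_le_card hAs) hcard
    have hApos : (0:ℝ) < A.card := by exact_mod_cast Finset.card_pos.2 hAne
    nlinarith [Finset.sum_nonneg (fun y (_ : y ∈ A) => sq_nonneg (w y))]
  have hR2 : R^2 ≤ 3/8 := by rw [hkey]; linarith
  have hRle : R ≤ Real.sqrt (3/8) := by
    rw [show (3:ℝ)/8 = R^2 + (3/8 - R^2) by ring]
    calc R = Real.sqrt (R^2) := by rw [Real.sqrt_sq hR0]
    _ ≤ _ := Real.sqrt_le_sqrt (by linarith)
  exact ⟨c, fun x hx => le_trans (hle x hx) hRle⟩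

end JungAux

section MainProof

open JungAux

local notation "E3" => EuclideanSpace ℝ (Fin 3)

lemma innerRight_continuous (u : E3) : Continuous (fun x : E3 => ⟪x, u⟫) :=
  continuous_id.inner continuous_const

lemma le_suppFn {K : Set E3} (hK : IsCompact K) {x : E3} (hx : x ∈ K) (u : E3) :
    ⟪x, u⟫ ≤ suppFn K u :=
  le_csSup ((hK.image (innerRight_continuous u)).bddAbove) ⟨x, hx, rfl⟩

lemma suppFn_le {K : Set E3} (hne : K.Nonempty) {u : E3} {c : ℝ}
    (h : ∀ x ∈ K, ⟪x, u⟫ ≤ c) : suppFn K u ≤ c :=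
  csSup_le (hne.image _) (by rintro _ ⟨x, hx, rfl⟩; exact h x hx)

lemma diam_le {K : Set E3} (hK : IsBodyOfConstantWidthOne K) :
    ∀ x ∈ K, ∀ y ∈ K, dist x y ≤ 1 := by
  obtain ⟨hne, hcpt, hconv, hw⟩ := hK
  intro x hx y hy
  have h1 : ⟪x, x - y⟫ ≤ suppFn K (x - y) := le_suppFn hcpt hx _
  have h2 : ⟪y, -(x - y)⟫ ≤ suppFn K (-(x - y)) := le_suppFn hcpt hy _
  have hsum := hw (x - y)
  have hid : ⟪x, x - y⟫ + ⟪y, -(x - y)⟫ = ‖x - y‖^2 := by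
    rw [← real_inner_self_eq_norm_sq, inner_neg_right, ← sub_eq_add_neg, ← inner_sub_left]
  have hn : ‖x - y‖^2 ≤ ‖x - y‖ := by
    calc ‖x - y‖^2 = ⟪x, x - y⟫ + ⟪y, -(x - y)⟫ := hid.symm
    _ ≤ suppFn K (x - y) + suppFn K (-(x - y)) := add_le_add h1 h2
    _ = ‖x - y‖ := hsum
  rw [dist_eq_norm]
  nlinarith [norm_nonneg (x - y)]

lemma exists_circumball {K : Set E3} (hK : IsBodyOfConstantWidthOne K) :
    ∃ a : E3, K ⊆ closedBall a (Real.sqrt (3/8)) := by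
  classical
  obtain ⟨hne, hcpt, hconv, hw⟩ := hK
  have hdiam := diam_le ⟨hne, hcpt, hconv, hw⟩
  haveI : Nonempty K := hne.to_subtype
  have hH := Convex.helly_theorem_compact' (𝕜 := ℝ)
    (F := fun x : K => closedBall (x : E3) (Real.sqrt (3/8)))
    (fun _ => convex_closedBall _ _) (fun _ => isCompact_closedBall _ _) ?_
  · obtain ⟨a, ha⟩ := hH
    refine ⟨a, fun x hx => ?_⟩
    have := Set.mem_iInter.1 ha ⟨x, hx⟩
    rw [mem_closedBall] at this ⊢
    rwa [dist_comm]
  · intro I hIcard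
    rcases I.eq_empty_or_nonempty with rfl | hIne
    · simp
    · set s : Finset E3 := I.image Subtype.val with hs
      have hsne : s.Nonempty := hIne.image _
      have hscard : s.card ≤ 4 := by
        refine le_trans Finset.card_image_le ?_
        have h3 : Module.finrank ℝ (EuclideanSpace ℝ (Fin 3)) = 3 := finrank_euclideanSpace_fin
        rw [h3] at hIcard
        omega
      have hsd : ∀ x ∈ s, ∀ y ∈ s, dist x y ≤ 1 := by
        intro x hx y hy
        rw [hs, Finset.mem_image] at hx hy
        obtain ⟨⟨x', hx'⟩, _, rfl⟩ := hx
        obtain ⟨⟨y', hy'⟩, _, rfl⟩ := hy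
        exact hdiam _ hx' _ hy'
      obtain ⟨c, hc⟩ := jung_finite s hsne hscard hsd
      refine ⟨c, Set.mem_iInter₂.2 fun i hi => ?_⟩
      have := hc i.val (Finset.mem_image_of_mem _ hi)
      rw [mem_closedBall]
      exact this

theorem circumradius_le_and_inradius_ge
    (K : Set (EuclideanSpace ℝ (Fin 3))) (hK : IsBodyOfConstantWidthOne K) :
    circumradius K ≤ Real.sqrt (3 / 8) ∧ 1 - Real.sqrt (3 / 8) ≤ inradius K := by
  obtain ⟨a, ha⟩ := exists_circumball hK
  obtain ⟨hne, hcpt, hconv, hw⟩ := hK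
  have hdiam := diam_le ⟨hne, hcpt, hconv, hw⟩
  have hsq1 : Real.sqrt (3/8) ≤ 1 := by
    calc Real.sqrt (3/8) ≤ Real.sqrt 1 := Real.sqrt_le_sqrt (by norm_num)
    _ = 1 := Real.sqrt_one
  constructor
  · exact csInf_le ⟨0, fun r hr => hr.1⟩ ⟨Real.sqrt_nonneg _, a, ha⟩
  · -- the inscribed ball
    have hball : closedBall a (1 - Real.sqrt (3/8)) ⊆ K := by
      intro y hy
      rw [mem_closedBall] at hy
      by_contra hyK
      obtain ⟨p, hp, hproj⟩ := exists_proj hconv hcpt hne y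
      have hpy : p ≠ y := fun h => hyK (h ▸ hp)
      set u := y - p with hu
      have hun : 0 < ‖u‖ := by
        simp only [hu, norm_pos_iff, sub_ne_zero]
        exact fun h => hpy h.symm
      have hs1 : suppFn K u ≤ ⟪y, u⟫ - ‖u‖^2 := by
        refine suppFn_le hne fun x hx => ?_
        have h1 := hproj x hx
        rw [inner_sub_right] at h1
        have hxp : ⟪x, u⟫ ≤ ⟪p, u⟫ := by
          have e1 := real_inner_comm x u
          have e2 := real_inner_comm p u
          linarith
        have hpu : ⟪p, u⟫ = ⟪y, u⟫ - ‖u‖^2 := by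
          have hpe : p = y - u := by rw [hu]; abel
          rw [hpe, inner_sub_left, real_inner_self_eq_norm_sq]
        linarith
      have hs2 : suppFn K (-u) ≤ -⟪a, u⟫ + Real.sqrt (3/8) * ‖u‖ := by
        refine suppFn_le hne fun x hx => ?_
        have hxa : ‖x - a‖ ≤ Real.sqrt (3/8) := by
          rw [← dist_eq_norm]; exact mem_closedBall.1 (ha hx)
        have h3 : ⟪x, -u⟫ = -⟪a, u⟫ + ⟪x - a, -u⟫ := by
          simp only [inner_neg_right, inner_sub_left]
          ring
        rw [h3]
        have h4 : ⟪x - a, -u⟫ ≤ ‖x - a‖ * ‖u‖ := by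
          calc ⟪x - a, -u⟫ ≤ ‖x - a‖ * ‖-u‖ := real_inner_le_norm _ _
          _ = ‖x - a‖ * ‖u‖ := by rw [norm_neg]
        have h5 : ‖x - a‖ * ‖u‖ ≤ Real.sqrt (3/8) * ‖u‖ :=
          mul_le_mul_of_nonneg_right hxa (norm_nonneg _)
        linarith
      have hyu : ⟪y, u⟫ ≤ ⟪a, u⟫ + (1 - Real.sqrt (3/8)) * ‖u‖ := by
        have h6 : ⟪y, u⟫ = ⟪a, u⟫ + ⟪y - a, u⟫ := by
          simp only [inner_sub_left]; ring
        rw [h6]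
        have h7 : ⟪y - a, u⟫ ≤ ‖y - a‖ * ‖u‖ := real_inner_le_norm _ _
        have h8 : ‖y - a‖ ≤ 1 - Real.sqrt (3/8) := by rw [← dist_eq_norm]; exact hy
        have h9 : ‖y - a‖ * ‖u‖ ≤ (1 - Real.sqrt (3/8)) * ‖u‖ :=
          mul_le_mul_of_nonneg_right h8 (norm_nonneg _)
        linarith
      have hwu := hw u
      nlinarith [pow_pos hun 2, hs1, hs2, hyu, hwu]
    -- bddAbove of the inradius defining set
    have hbdd : BddAbove {r : ℝ | 0 ≤ r ∧ ∃ a : E3, closedBall a r ⊆ K} := by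
      refine ⟨1, fun r hr => ?_⟩
      obtain ⟨hr0, b, hb⟩ := hr
      set e : E3 := EuclideanSpace.single (0 : Fin 3) (1 : ℝ) with he
      have hne' : ‖e‖ = 1 := by simp [he]
      have hb1 : b ∈ K := hb (mem_closedBall_self hr0)
      have hb2 : b + r • e ∈ K := by
        apply hb
        rw [mem_closedBall, dist_eq_norm]
        simp [norm_smul, hne', abs_of_nonneg hr0]
      have := hdiam _ hb2 _ hb1
      rw [dist_eq_norm] at this
      simp only [add_sub_cancel_left] at this
      rw [norm_smul, hne', Real.norm_eq_abs, abs_of_nonneg hr0, mul_one] at this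
      exact this
    exact le_csSup hbdd ⟨by linarith, a, hball⟩

end MainProof
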